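/- A ring R is a CSNC ring if and only if the following two conditions hold: (1) the element 2 of R is nilpotent; and (2) for every clean element a of R there exists a natural number k ≥ 0 such that a^(2^k) is a strongly nil-clean element of R. -/

import Mathlib

/-- An element `a` of a ring is *clean* if `a = e + u` for some idempotent `e` and unit `u`. -/
def IsCleanElem {R : Type*} [Ring R] (a : R) : Prop :=
  ∃ e u : R, IsIdempotentElem e ∧ IsUnit u ∧ a = e + u

/-- An element `a` of a ring is *strongly nil-clean* if `a = e + q` for some idempotent `e`
and nilpotent `q` with `e * q = q * e`. -/
def IsStronglyNilCleanElem {R : Type*} [Ring R] (a : R) : Prop :=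
  ∃ e q : R, IsIdempotentElem e ∧ IsNilpotent q ∧ e * q = q * e ∧ a = e + q

/-- A ring is a *CSNC ring* if every clean element is strongly nil-clean. -/
def IsCSNCRing (R : Type*) [Ring R] : Prop :=
  ∀ a : R, IsCleanElem a → IsStronglyNilCleanElem a

open Polynomial

section AuxCSNC
variable {R : Type*} [Ring R]

private lemma aeval_commute' (a : R) (p q : ℤ[X]) :
    Commute (aeval a p) (aeval a q) := by
  unfold Commute SemiconjBy
  rw [← map_mul, ← map_mul, mul_comm]

/-- A strongly nil-clean element satisfies `a - a ^ 2` nilpotent. -/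
private lemma snc_nil {a : R} (h : IsStronglyNilCleanElem a) : IsNilpotent (a - a ^ 2) := by
  obtain ⟨e, q, he, hq, hc, rfl⟩ := h
  have h1 : e * e = e := he
  have key : (e + q) - (e + q) ^ 2 = q * (1 - 2 * e - q) := by
    simp only [pow_two, mul_add, add_mul, mul_sub, mul_one, two_mul, h1, hc]
    abel
  rw [key]
  have hcomm : Commute q (1 - 2 * e - q) := by
    have h2 : Commute q (2 * e) := by
      rw [← one_add_one_eq_two]
      exact ((Commute.one_right q).add_right (Commute.one_right q)).mul_right hc.symm
    exact ((Commute.one_right q).sub_right h2).sub_right (Commute.refl q)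
  exact hcomm.isNilpotent_mul_right hq

/-- If `a - a ^ 2` is nilpotent, then `a` is strongly nil-clean. -/
private lemma nil_snc {a : R} (h : IsNilpotent (a - a ^ 2)) : IsStronglyNilCleanElem a := by
  obtain ⟨n0, hn0⟩ := h
  have hn : (a - a ^ 2) ^ (n0 + 1) = 0 := by rw [pow_succ', hn0, mul_zero]
  obtain ⟨s, t, hst⟩ :=
    (show IsCoprime (X : ℤ[X]) (1 - X) from ⟨1, 1, by ring⟩).pow (m := n0 + 1) (n := n0 + 1)
  have hXX : ∀ m : ℕ, ((X : ℤ[X]) - X ^ 2) ^ m = X ^ m * (1 - X) ^ m := fun m => by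
    rw [show (X : ℤ[X]) - X ^ 2 = X * (1 - X) by ring, mul_pow]
  have h0 : aeval a ((X - X ^ 2 : ℤ[X]) ^ (n0 + 1)) = 0 := by
    rw [map_pow, map_sub, map_pow, aeval_X]; exact hn
  have hker : ∀ p : ℤ[X], ((X - X ^ 2) ^ (n0 + 1) ∣ p) → aeval a p = 0 := by
    rintro p ⟨c, rfl⟩
    rw [map_mul, h0, zero_mul]
  refine ⟨aeval a (s * X ^ (n0 + 1)), aeval a (X - s * X ^ (n0 + 1)), ?_, ?_,
    aeval_commute' a _ _, ?_⟩
  · show _ * _ = _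
    rw [← map_mul]
    have hd : (X - X ^ 2 : ℤ[X]) ^ (n0 + 1) ∣
        (s * X ^ (n0 + 1) * (s * X ^ (n0 + 1)) - s * X ^ (n0 + 1)) := by
      refine ⟨-(s * t), ?_⟩
      rw [hXX]
      linear_combination ((s * X ^ (n0 + 1)) : ℤ[X]) * hst
    have := hker _ hd
    rw [map_sub] at this
    exact sub_eq_zero.mp this
  · have hdecomp : (X : ℤ[X]) - s * X ^ (n0 + 1) =
        (t * (X - X ^ 2) * (1 - X) ^ n0) + (-(s * (X - X ^ 2) * X ^ n0)) := by
      linear_combination (-(X : ℤ[X])) * hst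
    rw [hdecomp, map_add]
    have hA : IsNilpotent (aeval a (t * ((X : ℤ[X]) - X ^ 2) * (1 - X) ^ n0)) := by
      refine ⟨n0 + 1, ?_⟩
      rw [← map_pow]
      apply hker
      exact ⟨t ^ (n0 + 1) * ((1 - X) ^ n0) ^ (n0 + 1), by rw [mul_pow, mul_pow]; ring⟩
    have hB : IsNilpotent (aeval a (-(s * ((X : ℤ[X]) - X ^ 2) * X ^ n0))) := by
      refine ⟨n0 + 1, ?_⟩
      rw [← map_pow]
      apply hker
      refine ⟨(-1) ^ (n0 + 1) * (s ^ (n0 + 1) * (X ^ n0) ^ (n0 + 1)), ?_⟩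
      rw [show -(s * ((X : ℤ[X]) - X ^ 2) * X ^ n0) =
        (-1) * s * ((X : ℤ[X]) - X ^ 2) * X ^ n0 by ring, mul_pow, mul_pow, mul_pow]
      ring
    exact (aeval_commute' a _ _).isNilpotent_add hA hB
  · rw [← map_add]
    simp

/-- If `2` is nilpotent and `a ^ (2 ^ k) - (a ^ (2 ^ k)) ^ 2` is nilpotent,
then `a - a ^ 2` is nilpotent. -/
private lemma nil_two_descend {a : R} (h2 : IsNilpotent (2 : R)) (k : ℕ)
    (h : IsNilpotent (a ^ 2 ^ k - (a ^ 2 ^ k) ^ 2)) : IsNilpotent (a - a ^ 2) := by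
  have key : ∃ c : ℤ[X], ((X : ℤ[X]) - X ^ 2) ^ 2 ^ k
      = (X ^ 2 ^ k - (X ^ 2 ^ k) ^ 2) + 2 * c := by
    have hdvd : (2 : ℤ[X]) ∣ ((X - X ^ 2) ^ 2 ^ k - (X ^ 2 ^ k - (X ^ 2 ^ k) ^ 2)) := by
      have h2C : (2 : ℤ[X]) = C 2 := by simp
      rw [h2C, C_dvd_iff_dvd_coeff]
      intro i
      have hmap : map (Int.castRingHom (ZMod 2))
          (((X : ℤ[X]) - X ^ 2) ^ 2 ^ k - (X ^ 2 ^ k - (X ^ 2 ^ k) ^ 2)) = 0 := by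
        simp only [Polynomial.map_sub, Polynomial.map_pow, Polynomial.map_X]
        rw [sub_pow_char_pow (p := 2)]
        ring
      have h0' := congrArg (fun p => coeff p i) hmap
      simp only [coeff_map, coeff_zero, Int.coe_castRingHom] at h0'
      exact_mod_cast (ZMod.intCast_zmod_eq_zero_iff_dvd _ 2).mp h0'
    obtain ⟨c, hc⟩ := hdvd
    exact ⟨c, by linear_combination hc⟩
  obtain ⟨c, hc⟩ := key
  have heq : (a - a ^ 2) ^ 2 ^ k
      = aeval a ((X ^ 2 ^ k - (X ^ 2 ^ k) ^ 2) + 2 * c) := by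
    have := congrArg (aeval a) hc
    rw [map_pow, map_sub, map_pow, aeval_X] at this
    exact this
  have hu : IsNilpotent (aeval a ((X : ℤ[X]) ^ 2 ^ k - (X ^ 2 ^ k) ^ 2)) := by
    rw [map_sub, map_pow, map_pow, map_pow, aeval_X]
    exact h
  have hv : IsNilpotent (aeval a (2 * c : ℤ[X])) := by
    rw [map_mul, map_ofNat]
    have hcm : Commute (2 : R) (aeval a c) := by
      rw [← one_add_one_eq_two]
      exact (Commute.one_left _).add_left (Commute.one_left _)
    exact hcm.isNilpotent_mul_right h2
  have hpow : IsNilpotent ((a - a ^ 2) ^ 2 ^ k) := by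
    rw [heq, map_add]
    exact (aeval_commute' a _ _).isNilpotent_add hu hv
  obtain ⟨j, hj⟩ := hpow
  exact ⟨2 ^ k * j, by rw [pow_mul]; exact hj⟩

end AuxCSNC

theorem stmt_15 (R : Type*) [Ring R] :
    IsCSNCRing R ↔
      IsNilpotent (2 : R) ∧
        ∀ a : R, IsCleanElem a → ∃ k : ℕ, IsStronglyNilCleanElem (a ^ 2 ^ k) := by
  constructor
  · intro h
    constructor
    · have h2clean : IsCleanElem (2 : R) :=
        ⟨1, 1, IsIdempotentElem.one, isUnit_one, by norm_num⟩
      have hnil := snc_nil (h 2 h2clean)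
      have h2eq : (2 : R) - 2 ^ 2 = -2 := by
        rw [pow_two, two_mul, ← one_add_one_eq_two]
        abel
      rw [h2eq] at hnil
      simpa using hnil.neg
    · intro a ha
      exact ⟨0, by simpa using h a ha⟩
  · rintro ⟨h2, hcond⟩ a ha
    obtain ⟨k, hk⟩ := hcond a ha
    exact nil_snc (nil_two_descend h2 k (snc_nil hk))
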